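/- Let n ≥ 1, a < b, c ∈ [a, b], E ∈ ℝ, and let V : ℝ → Matrix (Fin n) (Fin n) ℝ be continuous with V(x) symmetric for all x. Let A₁, A₂, B₁, B₂ be real n×n matrices with A₁·A₂ᵀ = A₂·A₁ᵀ, B₁·B₂ᵀ = B₂·B₁ᵀ, and such that the only v ∈ ℝⁿ with A₁ᵀ·v = 0 and A₂ᵀ·v = 0 is v = 0, and the only v ∈ ℝⁿ with B₁ᵀ·v = 0 and B₂ᵀ·v = 0 is v = 0. Let Y_L, Y_R : ℝ → Matrix (Fin n) (Fin n) ℝ be twice differentiable with Y_L''(x) = (V(x) − E·I)·Y_L(x) and Y_R''(x) = (V(x) − E·I)·Y_R(x) for all x, with Y_L(a) = A₂ᵀ, Y_L'(a) = −A₁ᵀ, Y_R(b) = B₂ᵀ, Y_R'(b) = −B₁ᵀ. Assume Y_L'(c) and Y_R'(c) are invertible and set Ψ_L(c) = Y_L(c)·(Y_L'(c))⁻¹ and Ψ_R(c) = Y_R(c)·(Y_R'(c))⁻¹. Then the following are equivalent: (i) there exists a twice differentiable y : ℝ → (Fin n → ℝ) with y''(x) = (V(x) − E·I).mulVec y(x)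 for all x ∈ [a,b], A₁.mulVec y(a) + A₂.mulVec y'(a) = 0, B₁.mulVec y(b) + B₂.mulVec y'(b) = 0, and y(x) ≠ 0 for some x ∈ [a,b]; (ii) det(Ψ_L(c) − Ψ_R(c)) = 0. -/

import Mathlib

attribute [local instance] Matrix.normedAddCommGroup Matrix.normedSpace

open scoped Matrix
open Set

/-- `y` (with first derivative `y₁`) is a solution of the coupled-channel
boundary value problem on `[a,b]`. -/
def IsBVPSolution (n : ℕ) (a b E : ℝ) (V : ℝ → Matrix (Fin n) (Fin n) ℝ)
    (A₁ A₂ B₁ B₂ : Matrix (Fin n) (Fin n) ℝ) (y y₁ : ℝ → Fin n → ℝ) : Prop :=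
  (∀ x, HasDerivAt y (y₁ x) x) ∧
  (∀ x ∈ Icc a b,
    HasDerivAt y₁ ((V x - E • (1 : Matrix (Fin n) (Fin n) ℝ)).mulVec (y x)) x) ∧
  A₁.mulVec (y a) + A₂.mulVec (y₁ a) = 0 ∧
  B₁.mulVec (y b) + B₂.mulVec (y₁ b) = 0

namespace CCAux

variable {n : ℕ}

lemma norm_mulVec_le (A : Matrix (Fin n) (Fin n) ℝ) (x : Fin n → ℝ) :
    ‖A.mulVec x‖ ≤ (n : ℝ) * ‖A‖ * ‖x‖ := by
  rw [pi_norm_le_iff_of_nonneg (by positivity)]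
  intro i
  have : A.mulVec x i = ∑ j, A i j * x j := by
    simp [Matrix.mulVec, dotProduct]
  rw [this]
  calc ‖∑ j, A i j * x j‖ ≤ ∑ j, ‖A i j * x j‖ := norm_sum_le _ _
    _ ≤ ∑ _j : Fin n, ‖A‖ * ‖x‖ := by
        refine Finset.sum_le_sum fun j _ => ?_
        rw [norm_mul]
        exact mul_le_mul (Matrix.norm_entry_le_entrywise_sup_norm A)
          (norm_le_pi_norm x j) (norm_nonneg _) (norm_nonneg _)
    _ = (n : ℝ) * ‖A‖ * ‖x‖ := by
        simp [Finset.sum_const, mul_assoc]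

noncomputable def mvCLM (u : Fin n → ℝ) : Matrix (Fin n) (Fin n) ℝ →L[ℝ] (Fin n → ℝ) :=
  LinearMap.toContinuousLinearMap
    { toFun := fun A => A.mulVec u
      map_add' := fun A B => Matrix.add_mulVec A B u
      map_smul' := fun c A => Matrix.smul_mulVec c A u }

lemma hasDerivAt_mulVec {Y : ℝ → Matrix (Fin n) (Fin n) ℝ} {D : Matrix (Fin n) (Fin n) ℝ}
    {x : ℝ} (h : HasDerivAt Y D x) (u : Fin n → ℝ) :
    HasDerivAt (fun t => (Y t).mulVec u) (D.mulVec u) x :=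
  (mvCLM u).hasFDerivAt.comp_hasDerivAt x h

/-- Uniqueness for the first-order system `z' = (z₂, M t ⬝ z₁)` on `[a,b]`,
with matching at any point `t₀ ∈ [a,b]`. -/
lemma pair_ode_unique (M : ℝ → Matrix (Fin n) (Fin n) ℝ) (hM : Continuous M)
    {a b t₀ : ℝ} (hab : a ≤ b) (ht₀ : t₀ ∈ Icc a b)
    {f g : ℝ → (Fin n → ℝ) × (Fin n → ℝ)}
    (hf : ∀ t ∈ Icc a b, HasDerivAt f ((f t).2, (M t).mulVec (f t).1) t)
    (hg : ∀ t ∈ Icc a b, HasDerivAt g ((g t).2, (M t).mulVec (g t).1) t)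
    (heq : f t₀ = g t₀) : EqOn f g (Icc a b) := by
  obtain ⟨C, hC⟩ := isCompact_Icc.exists_bound_of_continuousOn
    (hM.continuousOn (s := Icc a b))
  set C' : ℝ := max C 0 with hC'
  have hC'0 : 0 ≤ C' := le_max_right _ _
  have hCle : ∀ t ∈ Icc a b, ‖M t‖ ≤ C' := fun t ht => (hC t ht).trans (le_max_left _ _)
  set π : ℝ → ℝ := fun t => min b (max a t) with hπ
  have hπmem : ∀ t, π t ∈ Icc a b := fun t =>
    ⟨le_min hab (le_max_left _ _), min_le_left _ _⟩
  have hπeq : ∀ t ∈ Icc a b, π t = t := fun t ht => by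
    simp only [hπ, max_eq_right ht.1, min_eq_right ht.2]
  set v : ℝ → ((Fin n → ℝ) × (Fin n → ℝ)) → ((Fin n → ℝ) × (Fin n → ℝ)) :=
    fun t z => (z.2, (M (π t)).mulVec z.1) with hv
  set K : NNReal := ⟨max 1 ((n : ℝ) * C'), le_trans zero_le_one (le_max_left _ _)⟩ with hK
  have hlip : ∀ t, LipschitzOnWith K (v t) univ := by
    intro t
    apply LipschitzWith.lipschitzOnWith
    apply LipschitzWith.of_dist_le_mul
    intro z w
    rw [Prod.dist_eq]
    have h1 : dist (v t z).1 (v t w).1 = dist z.2 w.2 := rfl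
    have h2 : dist (v t z).2 (v t w).2 ≤ (n : ℝ) * C' * dist z.1 w.1 := by
      rw [dist_eq_norm, dist_eq_norm]
      have : (M (π t)).mulVec z.1 - (M (π t)).mulVec w.1 = (M (π t)).mulVec (z.1 - w.1) := by
        rw [Matrix.mulVec_sub]
      rw [this]
      calc ‖(M (π t)).mulVec (z.1 - w.1)‖ ≤ (n : ℝ) * ‖M (π t)‖ * ‖z.1 - w.1‖ :=
            norm_mulVec_le _ _
        _ ≤ (n : ℝ) * C' * ‖z.1 - w.1‖ := by
            apply mul_le_mul_of_nonneg_right _ (norm_nonneg _)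
            exact mul_le_mul_of_nonneg_left (hCle _ (hπmem t)) (Nat.cast_nonneg n)
    have hKval : (K : ℝ) = max 1 ((n : ℝ) * C') := rfl
    rw [hKval]
    apply max_le
    · rw [h1]
      calc dist z.2 w.2 ≤ dist z w := le_max_right _ _
        _ ≤ max 1 ((n : ℝ) * C') * dist z w := by
            nlinarith [dist_nonneg (x := z) (y := w), le_max_left 1 ((n:ℝ)*C')]
    · calc dist (v t z).2 (v t w).2 ≤ (n : ℝ) * C' * dist z.1 w.1 := h2
        _ ≤ max 1 ((n : ℝ) * C') * dist z w := by
            apply mul_le_mul (le_max_right _ _) (le_max_left _ _) dist_nonneg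
            exact le_trans zero_le_one (le_max_left _ _)
  have hfc : ContinuousOn f (Icc a b) := fun t ht =>
    (hf t ht).continuousAt.continuousWithinAt
  have hgc : ContinuousOn g (Icc a b) := fun t ht =>
    (hg t ht).continuousAt.continuousWithinAt
  have hfd : ∀ t ∈ Icc a b, HasDerivAt f (v t (f t)) t := fun t ht => by
    rw [hv]; simp only [hπeq t ht]; exact hf t ht
  have hgd : ∀ t ∈ Icc a b, HasDerivAt g (v t (g t)) t := fun t ht => by
    rw [hv]; simp only [hπeq t ht]; exact hg t ht
  rw [← Icc_union_Icc_eq_Icc ht₀.1 ht₀.2]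
  apply EqOn.union
  · exact ODE_solution_unique_of_mem_Icc_left (s := fun _ => univ) (fun t _ => hlip t)
      (hfc.mono (Icc_subset_Icc_right ht₀.2))
      (fun t ht => (hfd t ⟨le_of_lt ht.1, le_trans ht.2 ht₀.2⟩).hasDerivWithinAt)
      (fun _ _ => trivial)
      (hgc.mono (Icc_subset_Icc_right ht₀.2))
      (fun t ht => (hgd t ⟨le_of_lt ht.1, le_trans ht.2 ht₀.2⟩).hasDerivWithinAt)
      (fun _ _ => trivial) heq
  · exact ODE_solution_unique_of_mem_Icc_right (s := fun _ => univ) (fun t _ => hlip t)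
      (hfc.mono (Icc_subset_Icc_left ht₀.1))
      (fun t ht => (hfd t ⟨le_trans ht₀.1 ht.1, le_of_lt ht.2⟩).hasDerivWithinAt)
      (fun _ _ => trivial)
      (hgc.mono (Icc_subset_Icc_left ht₀.1))
      (fun t ht => (hgd t ⟨le_trans ht₀.1 ht.1, le_of_lt ht.2⟩).hasDerivWithinAt)
      (fun _ _ => trivial) heq

lemma exists_coeff (A₁ A₂ : Matrix (Fin n) (Fin n) ℝ)
    (hA : A₁ * A₂ᵀ = A₂ * A₁ᵀ)
    (hArank : ∀ v : Fin n → ℝ, A₁ᵀ.mulVec v = 0 → A₂ᵀ.mulVec v = 0 → v = 0)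
    (p q : Fin n → ℝ) (h : A₁.mulVec p + A₂.mulVec q = 0) :
    ∃ u : Fin n → ℝ, A₂ᵀ.mulVec u = p ∧ (-A₁ᵀ).mulVec u = q := by
  classical
  have nn : ∀ w : Fin n → ℝ, 0 ≤ w ⬝ᵥ w := fun w =>
    Finset.sum_nonneg fun i _ => mul_self_nonneg (w i)
  set Ψ : ((Fin n → ℝ) × (Fin n → ℝ)) →ₗ[ℝ] (Fin n → ℝ) :=
    A₁.mulVecLin.comp (LinearMap.fst ℝ _ _) + A₂.mulVecLin.comp (LinearMap.snd ℝ _ _) with hΨ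
  have hΨap : ∀ z : (Fin n → ℝ) × (Fin n → ℝ), Ψ z = A₁.mulVec z.1 + A₂.mulVec z.2 :=
    fun z => rfl
  have hsurj : Function.Surjective Ψ := by
    set M : Matrix (Fin n) (Fin n) ℝ := A₁ * A₁ᵀ + A₂ * A₂ᵀ with hM
    have hinj : Function.Injective M.mulVecLin := by
      rw [← LinearMap.ker_eq_bot, LinearMap.ker_eq_bot']
      intro z hz
      have hz' : M.mulVec z = 0 := hz
      have hdot : z ⬝ᵥ M.mulVec z = 0 := by rw [hz', dotProduct_zero]
      have key : ∀ A : Matrix (Fin n) (Fin n) ℝ,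
          z ⬝ᵥ (A * Aᵀ).mulVec z = (Aᵀ.mulVec z) ⬝ᵥ (Aᵀ.mulVec z) := by
        intro A
        rw [← Matrix.mulVec_mulVec, Matrix.dotProduct_mulVec, ← Matrix.mulVec_transpose]
      rw [hM, Matrix.add_mulVec, dotProduct_add, key A₁, key A₂] at hdot
      have h1 : A₁ᵀ.mulVec z = 0 := by
        rw [← dotProduct_self_eq_zero (v := A₁ᵀ.mulVec z)]
        have := nn (A₁ᵀ.mulVec z); have := nn (A₂ᵀ.mulVec z); linarith
      have h2 : A₂ᵀ.mulVec z = 0 := by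
        rw [← dotProduct_self_eq_zero (v := A₂ᵀ.mulVec z)]
        have := nn (A₁ᵀ.mulVec z); have := nn (A₂ᵀ.mulVec z); linarith
      exact hArank z h1 h2
    have hsurjM : Function.Surjective M.mulVecLin :=
      (LinearMap.injective_iff_surjective).1 hinj
    intro w
    obtain ⟨z, hzw⟩ := hsurjM w
    refine ⟨(A₁ᵀ.mulVec z, A₂ᵀ.mulVec z), ?_⟩
    rw [hΨap]
    simp only [Matrix.mulVec_mulVec]
    rw [← Matrix.add_mulVec]
    exact hzw
  set Φ : (Fin n → ℝ) →ₗ[ℝ] ((Fin n → ℝ) × (Fin n → ℝ)) :=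
    LinearMap.prod (A₂ᵀ).mulVecLin (-A₁ᵀ).mulVecLin with hΦ
  have hΦap : ∀ u, Φ u = (A₂ᵀ.mulVec u, (-A₁ᵀ).mulVec u) := fun u => rfl
  have hΦinj : Function.Injective Φ := by
    rw [← LinearMap.ker_eq_bot, LinearMap.ker_eq_bot']
    intro u hu
    have h1 : A₂ᵀ.mulVec u = 0 := congrArg Prod.fst hu
    have h2 : (-A₁ᵀ).mulVec u = 0 := congrArg Prod.snd hu
    rw [Matrix.neg_mulVec, neg_eq_zero] at h2
    exact hArank u h2 h1
  have hle : LinearMap.range Φ ≤ LinearMap.ker Ψ := by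
    rintro z ⟨u, rfl⟩
    rw [LinearMap.mem_ker, hΨap, hΦap]
    simp only [Matrix.mulVec_mulVec]
    rw [← Matrix.add_mulVec]
    have : A₁ * A₂ᵀ + A₂ * (-A₁ᵀ) = 0 := by
      rw [Matrix.mul_neg, hA]; exact sub_self _
    rw [this, Matrix.zero_mulVec]
  have hrange : LinearMap.range Φ = LinearMap.ker Ψ := by
    apply Submodule.eq_of_le_of_finrank_eq hle
    have h1 : Module.finrank ℝ (LinearMap.range Φ) = n := by
      rw [LinearMap.finrank_range_of_inj hΦinj, Module.finrank_fin_fun]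
    have h2 : Module.finrank ℝ (LinearMap.ker Ψ) = n := by
      have := LinearMap.finrank_range_add_finrank_ker Ψ
      rw [LinearMap.range_eq_top.2 hsurj] at this
      simp only [finrank_top, Module.finrank_fin_fun, Module.finrank_prod] at this
      omega
    rw [h1, h2]
  have hmem : (p, q) ∈ LinearMap.ker Ψ := by
    rw [LinearMap.mem_ker, hΨap]; exact h
  rw [← hrange] at hmem
  obtain ⟨u, hu⟩ := hmem
  rw [hΦap] at hu
  exact ⟨u, congrArg Prod.fst hu, congrArg Prod.snd hu⟩

end CCAux

/-- `E` is an eigenvalue of the coupled-channel boundary value problem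
(i.e. there is a nontrivial solution satisfying both boundary conditions)
if and only if `det(Ψ_L(c) - Ψ_R(c)) = 0`, where `Ψ_L`, `Ψ_R` are the
R-matrices of the left and right matrix solutions. -/
theorem eigenvalue_iff_det_match_zero (n : ℕ) (hn : 1 ≤ n) (a b c E : ℝ)
    (hab : a < b) (hc : c ∈ Icc a b)
    (V : ℝ → Matrix (Fin n) (Fin n) ℝ)
    (hVcont : Continuous V) (hVsymm : ∀ x, (V x)ᵀ = V x)
    (A₁ A₂ B₁ B₂ : Matrix (Fin n) (Fin n) ℝ)
    (hA : A₁ * A₂ᵀ = A₂ * A₁ᵀ) (hB : B₁ * B₂ᵀ = B₂ * B₁ᵀ)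
    (hArank : ∀ v : Fin n → ℝ, A₁ᵀ.mulVec v = 0 → A₂ᵀ.mulVec v = 0 → v = 0)
    (hBrank : ∀ v : Fin n → ℝ, B₁ᵀ.mulVec v = 0 → B₂ᵀ.mulVec v = 0 → v = 0)
    (YL YL₁ YR YR₁ : ℝ → Matrix (Fin n) (Fin n) ℝ)
    (hYL : ∀ x, HasDerivAt YL (YL₁ x) x)
    (hYL₁ : ∀ x, HasDerivAt YL₁ ((V x - E • (1 : Matrix (Fin n) (Fin n) ℝ)) * YL x) x)
    (hYR : ∀ x, HasDerivAt YR (YR₁ x) x)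
    (hYR₁ : ∀ x, HasDerivAt YR₁ ((V x - E • (1 : Matrix (Fin n) (Fin n) ℝ)) * YR x) x)
    (hYLa : YL a = A₂ᵀ) (hYL₁a : YL₁ a = -A₁ᵀ)
    (hYRb : YR b = B₂ᵀ) (hYR₁b : YR₁ b = -B₁ᵀ)
    (hLc : IsUnit (YL₁ c)) (hRc : IsUnit (YR₁ c)) :
    (∃ y y₁ : ℝ → Fin n → ℝ,
        IsBVPSolution n a b E V A₁ A₂ B₁ B₂ y y₁ ∧ ∃ x ∈ Icc a b, y x ≠ 0) ↔
    (YL c * (YL₁ c)⁻¹ - YR c * (YR₁ c)⁻¹).det = 0 := by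
  classical
  set M : ℝ → Matrix (Fin n) (Fin n) ℝ :=
    fun x => V x - E • (1 : Matrix (Fin n) (Fin n) ℝ) with hM
  have hMc : Continuous M := hVcont.sub continuous_const
  have detL : IsUnit (YL₁ c).det := (Matrix.isUnit_iff_isUnit_det _).1 hLc
  have detR : IsUnit (YR₁ c).det := (Matrix.isUnit_iff_isUnit_det _).1 hRc
  set ΨL : Matrix (Fin n) (Fin n) ℝ := YL c * (YL₁ c)⁻¹ with hΨL
  set ΨR : Matrix (Fin n) (Fin n) ℝ := YR c * (YR₁ c)⁻¹ with hΨR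
  -- pair solutions from the matrix solutions
  have hpairL : ∀ u : Fin n → ℝ, ∀ t,
      HasDerivAt (fun x => ((YL x).mulVec u, (YL₁ x).mulVec u))
        ((YL₁ t).mulVec u, (M t).mulVec ((YL t).mulVec u)) t := by
    intro u t
    have h1 := CCAux.hasDerivAt_mulVec (hYL t) u
    have h2 := CCAux.hasDerivAt_mulVec (hYL₁ t) u
    rw [← Matrix.mulVec_mulVec] at h2
    exact h1.prodMk h2
  have hpairR : ∀ u : Fin n → ℝ, ∀ t,
      HasDerivAt (fun x => ((YR x).mulVec u, (YR₁ x).mulVec u))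
        ((YR₁ t).mulVec u, (M t).mulVec ((YR t).mulVec u)) t := by
    intro u t
    have h1 := CCAux.hasDerivAt_mulVec (hYR t) u
    have h2 := CCAux.hasDerivAt_mulVec (hYR₁ t) u
    rw [← Matrix.mulVec_mulVec] at h2
    exact h1.prodMk h2
  rw [← Matrix.exists_mulVec_eq_zero_iff]
  constructor
  · -- eigenvalue → kernel vector
    rintro ⟨y, y₁, ⟨hdy, hdy₁, hbcA, hbcB⟩, x₀, hx₀, hyx₀⟩
    obtain ⟨u, hu1, hu2⟩ := CCAux.exists_coeff A₁ A₂ hA hArank (y a) (y₁ a) hbcA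
    obtain ⟨v, hv1, hv2⟩ := CCAux.exists_coeff B₁ B₂ hB hBrank (y b) (y₁ b) hbcB
    set f : ℝ → (Fin n → ℝ) × (Fin n → ℝ) := fun x => (y x, y₁ x) with hf
    set fL : ℝ → (Fin n → ℝ) × (Fin n → ℝ) :=
      fun x => ((YL x).mulVec u, (YL₁ x).mulVec u) with hfL
    set fR : ℝ → (Fin n → ℝ) × (Fin n → ℝ) :=
      fun x => ((YR x).mulVec v, (YR₁ x).mulVec v) with hfR
    have hfd : ∀ t ∈ Icc a b, HasDerivAt f ((f t).2, (M t).mulVec (f t).1) t :=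
      fun t ht => (hdy t).prodMk (hdy₁ t ht)
    have heqL : EqOn f fL (Icc a b) := by
      apply CCAux.pair_ode_unique M hMc hab.le (left_mem_Icc.2 hab.le) hfd
        (fun t _ => hpairL u t)
      show (y a, y₁ a) = ((YL a).mulVec u, (YL₁ a).mulVec u)
      rw [hYLa, hYL₁a, hu1, hu2]
    have heqR : EqOn f fR (Icc a b) := by
      apply CCAux.pair_ode_unique M hMc hab.le (right_mem_Icc.2 hab.le) hfd
        (fun t _ => hpairR v t)
      show (y b, y₁ b) = ((YR b).mulVec v, (YR₁ b).mulVec v)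
      rw [hYRb, hYR₁b, hv1, hv2]
    have hLc1 : y c = (YL c).mulVec u := congrArg Prod.fst (heqL hc)
    have hLc2 : y₁ c = (YL₁ c).mulVec u := congrArg Prod.snd (heqL hc)
    have hRc1 : y c = (YR c).mulVec v := congrArg Prod.fst (heqR hc)
    have hRc2 : y₁ c = (YR₁ c).mulVec v := congrArg Prod.snd (heqR hc)
    have hΨLp : ΨL.mulVec (y₁ c) = y c := by
      rw [hLc2, Matrix.mulVec_mulVec, hΨL, mul_assoc,
        Matrix.nonsing_inv_mul _ detL, mul_one, hLc1]
    have hΨRp : ΨR.mulVec (y₁ c) = y c := by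
      rw [hRc2, Matrix.mulVec_mulVec, hΨR, mul_assoc,
        Matrix.nonsing_inv_mul _ detR, mul_one, hRc1]
    refine ⟨y₁ c, ?_, ?_⟩
    · -- y₁ c ≠ 0
      intro hp0
      have hyc : y c = 0 := by
        rw [← hΨLp, hp0, Matrix.mulVec_zero]
      have hzero : EqOn f (fun _ => ((0 : Fin n → ℝ), (0 : Fin n → ℝ))) (Icc a b) := by
        apply CCAux.pair_ode_unique M hMc hab.le hc hfd
        · intro t _
          have : ((((fun _ => ((0 : Fin n → ℝ), (0 : Fin n → ℝ))) t).2 : Fin n → ℝ),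
              (M t).mulVec ((fun _ => ((0 : Fin n → ℝ), (0 : Fin n → ℝ))) t).1)
              = ((0 : Fin n → ℝ), (0 : Fin n → ℝ)) := by
            simp
          rw [this]
          exact hasDerivAt_const t _
        · show (y c, y₁ c) = ((0 : Fin n → ℝ), (0 : Fin n → ℝ))
          rw [hyc, hp0]
      have : y x₀ = 0 := congrArg Prod.fst (hzero hx₀)
      exact hyx₀ this
    · rw [Matrix.sub_mulVec, hΨLp, hΨRp, sub_self]
  · -- kernel vector → eigenvalue
    rintro ⟨p, hp, hps⟩
    set u : Fin n → ℝ := ((YL₁ c)⁻¹).mulVec p with hu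
    set v : Fin n → ℝ := ((YR₁ c)⁻¹).mulVec p with hv
    set y : ℝ → Fin n → ℝ := fun x => (YL x).mulVec u with hy
    set y₁ : ℝ → Fin n → ℝ := fun x => (YL₁ x).mulVec u with hy₁
    set fL : ℝ → (Fin n → ℝ) × (Fin n → ℝ) := fun x => (y x, y₁ x) with hfL
    set fR : ℝ → (Fin n → ℝ) × (Fin n → ℝ) :=
      fun x => ((YR x).mulVec v, (YR₁ x).mulVec v) with hfR
    have hfLc2 : y₁ c = p := by
      rw [hy₁]
      show (YL₁ c).mulVec (((YL₁ c)⁻¹).mulVec p) = p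
      rw [Matrix.mulVec_mulVec, Matrix.mul_nonsing_inv _ detL, Matrix.one_mulVec]
    have hfRc2 : (YR₁ c).mulVec v = p := by
      rw [hv, Matrix.mulVec_mulVec, Matrix.mul_nonsing_inv _ detR, Matrix.one_mulVec]
    have hfLc1 : y c = ΨL.mulVec p := by
      rw [hy]
      show (YL c).mulVec (((YL₁ c)⁻¹).mulVec p) = ΨL.mulVec p
      rw [Matrix.mulVec_mulVec]
    have hfRc1 : (YR c).mulVec v = ΨR.mulVec p := by
      rw [hv, Matrix.mulVec_mulVec]
    have hΨeq : ΨL.mulVec p = ΨR.mulVec p := by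
      have := hps
      rw [Matrix.sub_mulVec, sub_eq_zero] at this
      exact this
    have heqLR : EqOn fL fR (Icc a b) := by
      apply CCAux.pair_ode_unique M hMc hab.le hc
        (fun t _ => hpairL u t) (fun t _ => hpairR v t)
      show (y c, y₁ c) = ((YR c).mulVec v, (YR₁ c).mulVec v)
      rw [hfLc1, hfLc2, hfRc1, hfRc2, hΨeq]
    refine ⟨y, y₁, ⟨?_, ?_, ?_, ?_⟩, ?_⟩
    · intro x
      exact CCAux.hasDerivAt_mulVec (hYL x) u
    · intro x _
      have := CCAux.hasDerivAt_mulVec (hYL₁ x) u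
      rw [← Matrix.mulVec_mulVec] at this
      exact this
    · show A₁.mulVec ((YL a).mulVec u) + A₂.mulVec ((YL₁ a).mulVec u) = 0
      rw [hYLa, hYL₁a]
      simp only [Matrix.mulVec_mulVec]
      rw [← Matrix.add_mulVec]
      have : A₁ * A₂ᵀ + A₂ * (-A₁ᵀ) = 0 := by
        rw [Matrix.mul_neg, hA]; exact sub_self _
      rw [this, Matrix.zero_mulVec]
    · have h1 : y b = (YR b).mulVec v := congrArg Prod.fst (heqLR (right_mem_Icc.2 hab.le))
      have h2 : y₁ b = (YR₁ b).mulVec v := congrArg Prod.snd (heqLR (right_mem_Icc.2 hab.le))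
      rw [h1, h2, hYRb, hYR₁b]
      simp only [Matrix.mulVec_mulVec]
      rw [← Matrix.add_mulVec]
      have : B₁ * B₂ᵀ + B₂ * (-B₁ᵀ) = 0 := by
        rw [Matrix.mul_neg, hB]; exact sub_self _
      rw [this, Matrix.zero_mulVec]
    · -- nontriviality
      by_contra hcon
      push_neg at hcon
      have hder : HasDerivWithinAt y p (Icc a b) c := by
        have := CCAux.hasDerivAt_mulVec (hYL c) u
        rw [show (YL₁ c).mulVec u = p from hfLc2] at this
        exact this.hasDerivWithinAt
      have hder0 : HasDerivWithinAt y 0 (Icc a b) c :=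
        (hasDerivWithinAt_const c (Icc a b) (0 : Fin n → ℝ)).congr hcon (hcon c hc)
      exact hp ((uniqueDiffOn_Icc hab c hc).eq_deriv _ hder hder0)
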